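/- arXiv:1901.02763 — 5 statements merged into one kernel-verified Lean document; each statement's English description precedes it below -/
import Mathlib

section
/- Let f : ℝ^n → ℝ be twice continuously differentiable and suppose there exists a constant M_{2s} > 0 such that ‖∇f(x) − ∇f(y)‖ ≤ M_{2s}‖x − y‖ and f(x) − f(y) − ⟨∇f(x), x − y⟩ ≤ (M_{2s}/2)‖x − y‖² for all s-sparse x and all y with |supp(x) ∪ supp(y)| ≤ 2s. Let 0 < η < 1/M_{2s} and let x* be an optimal solution of (SCO). Then (i) x* is an η-stationary point of (SCO); (ii) the set P_s(x* − η∇f(x*)) contains exactly one element; consequently x* = P_s(x* − η∇f(x*)). -/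
open Finset Filter Topology

noncomputable section

variable {n : ℕ}

/-- Euclidean space ℝ^n -/
abbrev Euc (n : ℕ) := EuclideanSpace ℝ (Fin n)

/-- support of a vector as a Finset -/
def supp (x : Euc n) : Finset (Fin n) := Finset.univ.filter (fun i => x i ≠ 0)

/-- `x` is `s`-sparse, i.e. `‖x‖₀ ≤ s` -/
def Sparse (s : ℕ) (x : Euc n) : Prop := (supp x).card ≤ s

/-- hard-thresholding operator: the set of best s-sparse approximations of `x` -/
def HardThr (s : ℕ) (x : Euc n) : Set (Euc n) :=
  {z | Sparse s z ∧ ∀ w : Euc n, Sparse s w → ‖x - z‖ ≤ ‖x - w‖}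

/-- Hessian of `f` at `x` as a continuous linear map -/
def hess (f : Euc n → ℝ) (x : Euc n) : Euc n →L[ℝ] Euc n := fderiv ℝ (gradient f) x

/-- `x` is an η-stationary point of (SCO) -/
def EtaStationary (f : Euc n → ℝ) (s : ℕ) (η : ℝ) (x : Euc n) : Prop :=
  x ∈ HardThr s (x - η • gradient f x)

/-- the collection `T(x;η)` of best s-support index sets of `x - η ∇f(x)` -/
def TT (f : Euc n → ℝ) (s : ℕ) (η : ℝ) (x : Euc n) : Set (Finset (Fin n)) :=
  {T | T.card = s ∧ ∃ z ∈ HardThr s (x - η • gradient f x), supp z ⊆ T}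

/-- the map `F_η(x;T)`: gradient entries on `T`, `x` entries on `Tᶜ` -/
def Fmap (f : Euc n → ℝ) (T : Finset (Fin n)) (x : Euc n) : Euc n :=
  WithLp.toLp 2 (fun i => if i ∈ T then gradient f x i else x i)

/-- the point `x^k(α)` of the line search -/
def stepPt (T : Finset (Fin n)) (x d : Euc n) (a : ℝ) : Euc n :=
  WithLp.toLp 2 (fun i => if i ∈ T then x i + a * d i else 0)

/-- `f` is `M`-restricted strongly smooth (`M_{2s}`-RSS) -/
def RSS (f : Euc n → ℝ) (s : ℕ) (M : ℝ) : Prop :=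
  ∀ x y : Euc n, Sparse s x → (supp x ∪ supp y).card ≤ 2 * s →
    (inner ℝ y (hess f x y) : ℝ) ≤ M * ‖y‖ ^ 2

/-- `f` is `m`-restricted strongly convex (`m_{2s}`-RSC) -/
def RSC (f : Euc n → ℝ) (s : ℕ) (m : ℝ) : Prop :=
  ∀ x y : Euc n, Sparse s x → (supp x ∪ supp y).card ≤ 2 * s →
    m * ‖y‖ ^ 2 ≤ (inner ℝ y (hess f x y) : ℝ)

/-- `f` is `m`-restricted strongly convex on a set `U` (e.g. a neighborhood) -/
def RSCOn (f : Euc n → ℝ) (s : ℕ) (m : ℝ) (U : Set (Euc n)) : Prop :=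
  ∀ z ∈ U, Sparse s z → ∀ y : Euc n, (supp z ∪ supp y).card ≤ 2 * s →
    m * ‖y‖ ^ 2 ≤ (inner ℝ y (hess f z y) : ℝ)

/-- norm of the subvector of `v` indexed by `T` -/
def normOn (T : Finset (Fin n)) (v : Euc n) : ℝ := Real.sqrt (∑ i ∈ T, (v i) ^ 2)

/-- `f` is locally restricted Hessian Lipschitz continuous at `xs` with constant `L`:
for all `y, z` in `N_s(xs) = {z : supp xs ⊆ supp z, ‖z‖₀ ≤ s}` and every `T ⊇ supp xs`
with `|T| ≤ s`, the row-submatrix `∇²_{T:}` is `L`-Lipschitz (in operator norm). -/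
def RestrictedHessLip (f : Euc n → ℝ) (s : ℕ) (xs : Euc n) (L : ℝ) : Prop :=
  ∀ T : Finset (Fin n), T.card ≤ s → supp xs ⊆ T →
    ∀ y z : Euc n, supp xs ⊆ supp y → Sparse s y → supp xs ⊆ supp z → Sparse s z →
      ∀ w : Euc n, normOn T (hess f y w - hess f z w) ≤ L * ‖y - z‖ * ‖w‖

/-- the restricted Newton direction: `d_{T^c} = -x_{T^c}` and
`∇²_T f(x) d_T = ∇²_{T,T^c} f(x) x_{T^c} - ∇_T f(x)`
(equivalently `(∇²f(x) d)_T = -∇_T f(x)` given `d_{T^c} = -x_{T^c}`). -/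
def IsNewtonDir (f : Euc n → ℝ) (T : Finset (Fin n)) (x d : Euc n) : Prop :=
  (∀ i ∉ T, d i = -x i) ∧ (∀ i ∈ T, hess f x d i = -(gradient f x) i)

/-- the restricted gradient direction -/
def IsGradDir (f : Euc n → ℝ) (T : Finset (Fin n)) (x d : Euc n) : Prop :=
  (∀ i ∈ T, d i = -(gradient f x) i) ∧ (∀ i ∉ T, d i = -x i)

/-- acceptance condition for the Newton direction:
`⟨∇_T f(x), d_T⟩ ≤ -γ‖d‖² + ‖x_{T^c}‖²/(4η)` -/
def Accept (f : Euc n → ℝ) (γ η : ℝ) (T : Finset (Fin n)) (x d : Euc n) : Prop :=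
  ∑ i ∈ T, gradient f x i * d i ≤ -γ * ‖d‖ ^ 2 + (∑ i ∈ Tᶜ, (x i) ^ 2) / (4 * η)

/-- the search direction of NHTP: Newton direction if it exists and is accepted,
otherwise the restricted gradient direction -/
def SearchDir (f : Euc n → ℝ) (γ η : ℝ) (T : Finset (Fin n)) (x d : Euc n) : Prop :=
  (IsNewtonDir f T x d ∧ Accept f γ η T x d) ∨
  (IsGradDir f T x d ∧ ¬ ∃ dN : Euc n, IsNewtonDir f T x dN ∧ Accept f γ η T x dN)

/-- the Armijo inequality at steplength `a` -/
def ArmijoIneq (f : Euc n → ℝ) (σ : ℝ) (T : Finset (Fin n)) (x d : Euc n) (a : ℝ) : Prop :=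
  f (stepPt T x d a) ≤ f x + σ * a * (inner ℝ (gradient f x) d : ℝ)

/-- `\barα := min{(1-2σ)/(M/γ - σ), 1}` -/
def barAlpha (M γ σ : ℝ) : ℝ := min ((1 - 2 * σ) / (M / γ - σ)) 1

/-- `\barη := min{γ \barα β / M², \barα β, 1/(4M)}` -/
def barEta (M γ σ β : ℝ) : ℝ :=
  min (γ * (barAlpha M γ σ * β) / M ^ 2) (min (barAlpha M γ σ * β) (1 / (4 * M)))

/-- the sequences `(x^k, T_k, d^k, α_k)` are generated by the NHTP algorithm -/
structure NHTP (f : Euc n → ℝ) (s : ℕ) (γ σ β η : ℝ)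
    (x : ℕ → Euc n) (T : ℕ → Finset (Fin n)) (d : ℕ → Euc n) (α : ℕ → ℝ) : Prop where
  sparse0 : Sparse s (x 0)
  mem : ∀ k, T k ∈ TT f s η (x k)
  dir : ∀ k, SearchDir f γ η (T k) (x k) (d k)
  alpha : ∀ k, ∃ ℓ : ℕ, α k = β ^ ℓ ∧ ArmijoIneq f σ (T k) (x k) (d k) (β ^ ℓ) ∧
      ∀ m' < ℓ, ¬ ArmijoIneq f σ (T k) (x k) (d k) (β ^ m')
  update : ∀ k, x (k + 1) = stepPt (T k) (x k) (d k) (α k)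

/-- `x_{(s)}`: the s-th largest absolute value among the entries of `x` -/
def nthAbs (x : Euc n) (s : ℕ) : ℝ :=
  ((Finset.univ.val.map (fun i => |x i|)).sort (· ≤ ·)).getD (n - s) 0

end

section myaux
open InnerProductSpace

lemma my_normsq {n : ℕ} (v : Euc n) : ‖v‖^2 = ∑ i, (v i)^2 := by
  rw [EuclideanSpace.norm_eq, Real.sq_sqrt (by positivity)]
  simp [Real.norm_eq_abs, sq_abs]

lemma my_mem_supp {n : ℕ} (x : Euc n) (i : Fin n) : i ∈ supp x ↔ x i ≠ 0 := by
  simp [supp]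

lemma my_descent {n : ℕ} (f : Euc n → ℝ) (hf : Differentiable ℝ f) (M : ℝ)
    (xs z : Euc n)
    (hLip : ∀ t ∈ Set.Icc (0:ℝ) 1,
      ‖gradient f xs - gradient f (xs + t • (z - xs))‖ ≤ M * (t * ‖z - xs‖)) :
    f z ≤ f xs + (inner ℝ (gradient f xs) (z - xs) : ℝ) + M / 2 * ‖z - xs‖ ^ 2 := by
  set v := z - xs with hv
  set g := gradient f xs with hg
  set r := ‖v‖ with hr
  set ψ : ℝ → ℝ := fun t => f (xs + t • v) - t * (inner ℝ g v : ℝ) - M * r ^ 2 * t ^ 2 / 2 with hψ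
  have hder : ∀ t : ℝ, HasDerivAt ψ
      ((inner ℝ (gradient f (xs + t • v)) v : ℝ) - (inner ℝ g v : ℝ) - M * r ^ 2 * t) t := by
    intro t
    have hc : HasDerivAt (fun t : ℝ => xs + t • v) v t := by
      simpa using ((hasDerivAt_id t).smul_const v).const_add xs
    have hgr := (hf (xs + t • v)).hasGradientAt
    rw [hasGradientAt_iff_hasFDerivAt] at hgr
    have h1 : HasDerivAt (fun t : ℝ => f (xs + t • v))
        ((inner ℝ (gradient f (xs + t • v)) v : ℝ)) t := by
      have := hgr.comp_hasDerivAt t hc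
      rw [toDual_apply_apply] at this
      exact this
    have h2 : HasDerivAt (fun t : ℝ => t * (inner ℝ g v : ℝ)) ((inner ℝ g v : ℝ)) t := by
      simpa using (hasDerivAt_id t).mul_const ((inner ℝ g v : ℝ))
    have h3 : HasDerivAt (fun t : ℝ => M * r ^ 2 * t ^ 2 / 2) (M * r ^ 2 * t) t := by
      have := ((hasDerivAt_pow 2 t).const_mul (M * r ^ 2)).div_const 2
      convert this using 1
      · rfl
      · rfl
      · ring
    exact (h1.sub h2).sub h3
  have hanti : AntitoneOn ψ (Set.Icc (0:ℝ) 1) := by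
    apply antitoneOn_of_deriv_nonpos (convex_Icc 0 1)
    · exact fun t _ => ((hder t).differentiableAt).continuousAt.continuousWithinAt
    · exact fun t _ => ((hder t).differentiableAt).differentiableWithinAt
    · intro t ht
      rw [interior_Icc] at ht
      rw [(hder t).deriv]
      have hb : (inner ℝ (gradient f (xs + t • v)) v : ℝ) - (inner ℝ g v : ℝ) ≤ M * r ^ 2 * t := by
        have h1 : (inner ℝ (gradient f (xs + t • v)) v : ℝ) - (inner ℝ g v : ℝ)
            = (inner ℝ (gradient f (xs + t • v) - g) v : ℝ) := by
          rw [inner_sub_left]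
        rw [h1]
        calc (inner ℝ (gradient f (xs + t • v) - g) v : ℝ)
            ≤ ‖gradient f (xs + t • v) - g‖ * ‖v‖ := real_inner_le_norm _ _
          _ = ‖g - gradient f (xs + t • v)‖ * ‖v‖ := by rw [norm_sub_rev]
          _ ≤ M * (t * r) * r := by
              apply mul_le_mul_of_nonneg_right _ (norm_nonneg v)
              exact hLip t ⟨le_of_lt ht.1, le_of_lt ht.2⟩
          _ = M * r ^ 2 * t := by ring
      linarith
  have h01 : ψ 1 ≤ ψ 0 :=
    hanti (Set.mem_Icc.2 ⟨le_refl 0, zero_le_one⟩) (Set.mem_Icc.2 ⟨zero_le_one, le_refl 1⟩)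
      zero_le_one
  have e1 : xs + (1:ℝ) • v = z := by rw [one_smul, hv]; abel
  have e0 : xs + (0:ℝ) • v = xs := by rw [zero_smul, add_zero]
  have hψ1 : ψ 1 = f z - (inner ℝ g v : ℝ) - M * r ^ 2 / 2 := by
    show f (xs + (1:ℝ) • v) - 1 * (inner ℝ g v : ℝ) - M * r ^ 2 * 1 ^ 2 / 2 = _
    rw [e1]; ring
  have hψ0 : ψ 0 = f xs := by
    show f (xs + (0:ℝ) • v) - 0 * (inner ℝ g v : ℝ) - M * r ^ 2 * 0 ^ 2 / 2 = _
    rw [e0]; ring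
  rw [hψ1, hψ0] at h01
  linarith

end myaux
section mymain
open Finset

private lemma my_main {n s : ℕ} (f : Euc n → ℝ) (hf : ContDiff ℝ 2 f)
    (M : ℝ) (hM : 0 < M)
    (hlip : ∀ x y : Euc n, Sparse s x → (supp x ∪ supp y).card ≤ 2 * s →
      ‖gradient f x - gradient f y‖ ≤ M * ‖x - y‖ ∧
      f x - f y - (inner ℝ (gradient f x) (x - y) : ℝ) ≤ M / 2 * ‖x - y‖ ^ 2)
    (η : ℝ) (hη : 0 < η) (hηM : η < 1 / M)
    (xs : Euc n) (hxs : Sparse s xs) (hopt : ∀ x : Euc n, Sparse s x → f xs ≤ f x) :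
    xs ∈ HardThr s (xs - η • gradient f xs) ∧
      HardThr s (xs - η • gradient f xs) = {xs} := by
  have hdiff : Differentiable ℝ f := hf.differentiable (by norm_num)
  set g : Euc n := gradient f xs with hgdef
  set u : Euc n := xs - η • g with hu
  -- Step 1 : HardThr is nonempty
  have hne : ∃ z : Euc n, z ∈ HardThr s u := by
    obtain ⟨T₀, hT₀S, hT₀min⟩ := Finset.exists_min_image
      ((Finset.univ : Finset (Fin n)).powerset.filter (fun T => T.card ≤ s))
      (fun T => ∑ i ∈ Tᶜ, (u i)^2)
      ⟨∅, by simp⟩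
    have hT₀card : T₀.card ≤ s := (Finset.mem_filter.1 hT₀S).2
    set z₀ : Euc n := WithLp.toLp 2 (fun i => if i ∈ T₀ then u i else 0) with hz₀
    have hz₀supp : supp z₀ ⊆ T₀ := by
      intro i hi
      rw [my_mem_supp] at hi
      by_contra h
      apply hi
      simp [hz₀, h]
    have hz₀sp : Sparse s z₀ :=
      le_trans (Finset.card_le_card hz₀supp) hT₀card
    have hz₀norm : ‖u - z₀‖^2 = ∑ i ∈ T₀ᶜ, (u i)^2 := by
      rw [my_normsq]
      rw [← Finset.sum_add_sum_compl T₀ (fun i => ((u - z₀) i)^2)]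
      have h1 : ∑ i ∈ T₀, ((u - z₀) i)^2 = 0 := by
        apply Finset.sum_eq_zero
        intro i hi
        simp [hz₀, hi]
      have h2 : ∑ i ∈ T₀ᶜ, ((u - z₀) i)^2 = ∑ i ∈ T₀ᶜ, (u i)^2 := by
        apply Finset.sum_congr rfl
        intro i hi
        rw [Finset.mem_compl] at hi
        simp [hz₀, hi]
      rw [h1, h2, zero_add]
    refine ⟨z₀, hz₀sp, fun w hw => ?_⟩
    have hwS : supp w ∈ (Finset.univ : Finset (Fin n)).powerset.filter (fun T => T.card ≤ s) := by
      simp only [Finset.mem_filter, Finset.mem_powerset]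
      exact ⟨Finset.subset_univ _, hw⟩
    have h3 : ∑ i ∈ T₀ᶜ, (u i)^2 ≤ ∑ i ∈ (supp w)ᶜ, (u i)^2 := hT₀min _ hwS
    have h4 : ∑ i ∈ (supp w)ᶜ, (u i)^2 ≤ ‖u - w‖^2 := by
      rw [my_normsq]
      have h5 : ∑ i ∈ (supp w)ᶜ, (u i)^2 = ∑ i ∈ (supp w)ᶜ, ((u - w) i)^2 := by
        apply Finset.sum_congr rfl
        intro i hi
        rw [Finset.mem_compl, my_mem_supp, not_not] at hi
        simp [hi]
      rw [h5]
      apply Finset.sum_le_sum_of_subset_of_nonneg (Finset.subset_univ _)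
      intro i _ _
      positivity
    have hsq : ‖u - z₀‖^2 ≤ ‖u - w‖^2 := by rw [hz₀norm]; exact le_trans h3 h4
    have h6 := Real.sqrt_le_sqrt hsq
    rwa [Real.sqrt_sq (norm_nonneg _), Real.sqrt_sq (norm_nonneg _)] at h6
  -- Step 2 : uniqueness
  have huniq : ∀ z ∈ HardThr s u, z = xs := by
    rintro z ⟨hzsp, hzmin⟩
    set r : ℝ := ‖z - xs‖ with hrdef
    -- (a) inner ℝ bound
    have ha : (inner ℝ g (z - xs) : ℝ) ≤ -(r^2 / (2 * η)) := by
      have h1 : ‖u - z‖^2 ≤ ‖u - xs‖^2 := by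
        have := hzmin xs hxs
        have h0 : (0:ℝ) ≤ ‖u - z‖ := norm_nonneg _
        nlinarith [norm_nonneg (u - xs)]
      have h2 : u - xs = -(η • g) := by rw [hu]; abel
      have h3 : u - z = (xs - z) - η • g := by rw [hu]; abel
      have h4 : ‖u - xs‖^2 = η^2 * ‖g‖^2 := by
        rw [h2, norm_neg, norm_smul, mul_pow, Real.norm_eq_abs, sq_abs]
      have h5 : ‖u - z‖^2 = ‖xs - z‖^2 - 2 * (η * (inner ℝ (xs - z) g : ℝ)) + η^2 * ‖g‖^2 := by
        rw [h3, @norm_sub_sq_real, real_inner_smul_right, norm_smul,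
          Real.norm_eq_abs, mul_pow, sq_abs]
      have h6 : ‖xs - z‖ = r := by rw [hrdef, norm_sub_rev]
      have h7 : (inner ℝ g (z - xs) : ℝ) = -(inner ℝ (xs - z) g : ℝ) := by
        rw [real_inner_comm, ← inner_neg_left, neg_sub]
      rw [h4, h5, h6] at h1
      rw [h7]
      have h8 : r^2 ≤ 2 * η * (inner ℝ (xs - z) g : ℝ) := by nlinarith
      have h9 : 0 < 2 * η := by linarith
      have h10 : r^2 / (2 * η) ≤ (inner ℝ (xs - z) g : ℝ) := by
        rw [div_le_iff₀ h9]; linarith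
      linarith
    -- (b) Lipschitz on the segment
    have hcard2 : (supp xs ∪ supp z).card ≤ 2 * s := by
      calc (supp xs ∪ supp z).card ≤ (supp xs).card + (supp z).card :=
            Finset.card_union_le _ _
        _ ≤ 2 * s := by
            have e1 : (supp xs).card ≤ s := hxs
            have e2 : (supp z).card ≤ s := hzsp
            omega
    have hb : ∀ t ∈ Set.Icc (0:ℝ) 1,
        ‖gradient f xs - gradient f (xs + t • (z - xs))‖ ≤ M * (t * ‖z - xs‖) := by
      intro t ht
      set y : Euc n := xs + t • (z - xs) with hy
      have hysupp : supp y ⊆ supp xs ∪ supp z := by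
        intro i hi
        rw [my_mem_supp] at hi
        by_contra hcon
        rw [Finset.mem_union, my_mem_supp, my_mem_supp] at hcon
        push_neg at hcon
        apply hi
        have : y i = xs i + t * (z i - xs i) := by
          simp [hy]
        rw [this, hcon.1, hcon.2]
        ring
      have hc : (supp xs ∪ supp y).card ≤ 2 * s := by
        refine le_trans (Finset.card_le_card ?_) hcard2
        exact Finset.union_subset Finset.subset_union_left hysupp
      have hl := (hlip xs y hxs hc).1
      have hxy : ‖xs - y‖ = t * ‖z - xs‖ := by
        have : xs - y = -(t • (z - xs)) := by rw [hy]; abel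
        rw [this, norm_neg, norm_smul, Real.norm_eq_abs, abs_of_nonneg ht.1]
      rw [hxy] at hl
      exact hl
    -- (c) combine
    have hd := my_descent f hdiff M xs z hb
    have hfz : f xs ≤ f z := hopt z hzsp
    have hMη : M * η < 1 := by
      rw [lt_div_iff₀ hM] at hηM
      linarith
    have hr0 : r = 0 := by
      have h2η : 0 < 2 * η := by linarith
      have hkey : r^2 / (2*η) ≤ M / 2 * r^2 := by
        rw [hgdef] at ha
        nlinarith
      rw [div_le_iff₀ h2η] at hkey
      have hrsq : r^2 ≤ 0 := by nlinarith [sq_nonneg r]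
      have := sq_nonneg r
      have : r^2 = 0 := le_antisymm hrsq (sq_nonneg r)
      exact pow_eq_zero_iff (by norm_num) |>.1 this
    have : z - xs = 0 := norm_eq_zero.1 hr0
    have := sub_eq_zero.1 this
    exact this
  -- Step 3 : conclusion
  obtain ⟨z₀, hz₀⟩ := hne
  have hxsmem : xs ∈ HardThr s u := huniq z₀ hz₀ ▸ hz₀
  refine ⟨hxsmem, ?_⟩
  ext z
  constructor
  · intro hz
    exact huniq z hz
  · rintro rfl
    exact hxsmem

end mymain


/-- Theorem 1, existence of η-stationary points, Beck–Eldar: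
under the restricted Lipschitz-type conditions with constant `M > 0` and `0 < η < 1/M`,
any optimal solution `xs` of (SCO) is an η-stationary point, and
`P_s(xs - η ∇f(xs))` is exactly the singleton `{xs}`. -/
theorem stmt_0 {n s : ℕ} (hs : 1 ≤ s) (f : Euc n → ℝ) (hf : ContDiff ℝ 2 f)
    (M : ℝ) (hM : 0 < M)
    (hlip : ∀ x y : Euc n, Sparse s x → (supp x ∪ supp y).card ≤ 2 * s →
      ‖gradient f x - gradient f y‖ ≤ M * ‖x - y‖ ∧
      f x - f y - (inner ℝ (gradient f x) (x - y) : ℝ) ≤ M / 2 * ‖x - y‖ ^ 2)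
    (η : ℝ) (hη : 0 < η) (hηM : η < 1 / M)
    (xs : Euc n) (hxs : Sparse s xs) (hopt : ∀ x : Euc n, Sparse s x → f xs ≤ f x) :
    EtaStationary f s η xs ∧ HardThr s (xs - η • gradient f xs) = {xs} := by
  exact my_main f hf M hM hlip η hη hηM xs hxs hopt
end

section
/- Let η > 0, let T ∈ T(x;η), and suppose F_η(x;T) = 0. Then η|∇_i f(x)| ≤ x_{(s)} for every i ∈ T^c, where x_{(s)} is the s-th largest absolute value among the entries of x. -/
open Finset Filter Topology

lemma sum_sq_le_of_norm_le {n : ℕ} {v w : Euc n} (h : ‖v‖ ≤ ‖w‖) :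
    ∑ i, (v i)^2 ≤ ∑ i, (w i)^2 := by
  rw [EuclideanSpace.norm_eq, EuclideanSpace.norm_eq] at h
  have h2 : (Real.sqrt (∑ i, ‖v i‖ ^ 2))^2 ≤ (Real.sqrt (∑ i, ‖w i‖^2))^2 :=
    pow_le_pow_left₀ (Real.sqrt_nonneg _) h 2
  rw [Real.sq_sqrt (by positivity), Real.sq_sqrt (by positivity)] at h2
  simpa [Real.norm_eq_abs, sq_abs] using h2

lemma sorted_getD_ge (l : List ℝ) (hl : l.Pairwise (· ≤ ·)) (k : ℕ) (hk : k < l.length)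
    (m : ℝ) (hc : l.countP (fun a => decide (a < m)) ≤ k) : m ≤ l.getD k 0 := by
  by_contra hlt
  push_neg at hlt
  rw [List.getD_eq_getElem l 0 hk] at hlt
  have hall : ∀ a ∈ l.take (k+1), (fun a => decide (a < m)) a = true := by
    intro a ha
    rw [List.mem_take_iff_getElem] at ha
    obtain ⟨i, hi, rfl⟩ := ha
    have hi2 : i < l.length := lt_of_lt_of_le hi (min_le_right _ _)
    have hik : i ≤ k := by
      have := lt_of_lt_of_le hi (min_le_left _ _); omega
    have : l.get ⟨i, hi2⟩ ≤ l.get ⟨k, hk⟩ := hl.rel_get_of_le hik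
    simp only [List.get_eq_getElem] at this
    simp only [decide_eq_true_eq]
    linarith
  have h1 : (l.take (k+1)).countP (fun a => decide (a < m)) = (l.take (k+1)).length :=
    List.countP_eq_length.2 hall
  have h2 : (l.take (k+1)).length = k + 1 := by
    rw [List.length_take]; omega
  have h3 : l.countP (fun a => decide (a < m)) =
      (l.take (k+1)).countP (fun a => decide (a < m)) +
      (l.drop (k+1)).countP (fun a => decide (a < m)) := by
    conv_lhs => rw [← List.take_append_drop (k+1) l]
    rw [List.countP_append]
  omega

lemma le_nthAbs {n s : ℕ} (hs : 1 ≤ s) (x : Euc n) (T : Finset (Fin n)) (hTc : T.card = s)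
    (m : ℝ) (hm : ∀ j ∈ T, m ≤ |x j|) : m ≤ nthAbs x s := by
  classical
  have hsn : s ≤ n := by
    have := Finset.card_le_univ T
    simpa [hTc] using this
  set l := ((Finset.univ.val.map (fun i : Fin n => |x i|)).sort (· ≤ ·)) with hl
  have hlen : l.length = n := by simp [hl]
  have hk : n - s < l.length := by omega
  have hcount : l.countP (fun a => decide (a < m)) ≤ n - s := by
    have hc1 : l.countP (fun a => decide (a < m)) =
        Multiset.countP (fun a => a < m) (Finset.univ.val.map (fun i : Fin n => |x i|)) := by
      conv_rhs => rw [← Multiset.sort_eq (Finset.univ.val.map (fun i : Fin n => |x i|)) (· ≤ ·)]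
      rw [Multiset.coe_countP]
    rw [hc1, Multiset.countP_map]
    have : (Finset.univ.val.filter (fun a : Fin n => |x a| < m)) =
        (Finset.univ.filter (fun a : Fin n => |x a| < m)).val := rfl
    rw [this]
    have hsub : (Finset.univ.filter (fun a : Fin n => |x a| < m)) ⊆ Tᶜ := by
      intro j hj
      simp only [Finset.mem_filter] at hj
      simp only [Finset.mem_compl]
      intro hjT
      exact absurd (hm j hjT) (not_le.2 hj.2)
    calc (Finset.univ.filter (fun a : Fin n => |x a| < m)).card
        ≤ Tᶜ.card := Finset.card_le_card hsub
      _ = n - s := by rw [Finset.card_compl, hTc]; simp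
  exact sorted_getD_ge l (Multiset.pairwise_sort _ _) (n - s) hk m hcount


/-- Remark 4(ii): if `T ∈ T(x;η)` and `F_η(x;T) = 0`, then
`η|∇_i f(x)| ≤ x_{(s)}` for every `i ∈ T^c`. -/
theorem stmt_3 {n s : ℕ} (hs : 1 ≤ s) (f : Euc n → ℝ) (hf : ContDiff ℝ 2 f)
    (η : ℝ) (hη : 0 < η) (x : Euc n) (T : Finset (Fin n))
    (hT : T ∈ TT f s η x) (hF : Fmap f T x = 0) :
    ∀ i ∉ T, η * |gradient f x i| ≤ nthAbs x s := by
  classical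
  obtain ⟨hTcard, z, hz, hsub⟩ := hT
  intro i hi
  set g := gradient f x with hg
  set u : Euc n := x - η • g with hu
  have huap : ∀ k, u k = x k - η * g k := by
    intro k; simp [hu]
  have h0 : ∀ k, Fmap f T x k = 0 := by
    intro k; rw [hF]; rfl
  have hgT : ∀ j ∈ T, g j = 0 := by
    intro j hj; have := h0 j; simpa [Fmap, hj, hg] using this
  have hxTc : ∀ k, k ∉ T → x k = 0 := by
    intro k hk; have := h0 k; simpa [Fmap, hk] using this
  have hui : u i = -(η * g i) := by rw [huap, hxTc i hi]; ring
  have habs : |u i| = η * |g i| := by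
    rw [hui, abs_neg, abs_mul, abs_of_pos hη]
  have hzi : z i = 0 := by
    by_contra h
    exact hi (hsub (by simp [supp, h]))
  apply le_nthAbs hs x T hTcard
  intro j hj
  have hij : i ≠ j := fun h => hi (h ▸ hj)
  by_cases hcard : (supp z).card = s
  · -- supp z = T
    have hzT : supp z = T := Finset.eq_of_subset_of_card_le hsub (by omega)
    -- the swap vector
    set w : Euc n := WithLp.toLp 2 (fun k => if k = i then u i else if k = j then 0 else z k) with hw
    have hwap : ∀ k, w k = if k = i then u i else if k = j then 0 else z k := fun k => rfl
    have hws : Sparse s w := by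
      have hsubw : supp w ⊆ insert i ((supp z).erase j) := by
        intro k hk
        simp only [supp, Finset.mem_filter, Finset.mem_univ, true_and] at hk
        by_cases h1 : k = i
        · simp [h1]
        by_cases h2 : k = j
        · exact absurd (by simp [hwap, h1, h2, Ne.symm hij]) hk
        · have hzk : z k ≠ 0 := by
            intro h; exact hk (by simp [hwap, h1, h2, h])
          simp [Finset.mem_insert, Finset.mem_erase, h2, supp, hzk]
      have hjz : j ∈ supp z := hzT ▸ hj
      calc (supp w).card ≤ (insert i ((supp z).erase j)).card := Finset.card_le_card hsubw
        _ ≤ ((supp z).erase j).card + 1 := Finset.card_insert_le _ _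
        _ = ((supp z).card - 1) + 1 := by rw [Finset.card_erase_of_mem hjz]
        _ = s := by
            have : 1 ≤ (supp z).card := Finset.card_pos.2 ⟨j, hjz⟩
            omega
    have hle := hz.2 w hws
    have key : ∑ k, (u k - z k)^2 ≤ ∑ k, (u k - w k)^2 := by
      have := sum_sq_le_of_norm_le hle
      simpa using this
    have hjmem : j ∈ Finset.univ.erase i :=
      Finset.mem_erase.mpr ⟨Ne.symm hij, Finset.mem_univ j⟩
    have eF : ∑ k, (u k - z k)^2 =
        (u i - z i)^2 + ((u j - z j)^2 + ∑ k ∈ (Finset.univ.erase i).erase j, (u k - z k)^2) := by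
      rw [Finset.add_sum_erase _ (fun k => (u k - z k)^2) hjmem,
        Finset.add_sum_erase _ (fun k => (u k - z k)^2) (Finset.mem_univ i)]
    have eG : ∑ k, (u k - w k)^2 =
        (u i - w i)^2 + ((u j - w j)^2 + ∑ k ∈ (Finset.univ.erase i).erase j, (u k - w k)^2) := by
      rw [Finset.add_sum_erase _ (fun k => (u k - w k)^2) hjmem,
        Finset.add_sum_erase _ (fun k => (u k - w k)^2) (Finset.mem_univ i)]
    have eS : ∑ k ∈ (Finset.univ.erase i).erase j, (u k - w k)^2 =
        ∑ k ∈ (Finset.univ.erase i).erase j, (u k - z k)^2 := by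
      apply Finset.sum_congr rfl
      intro k hk
      simp only [Finset.mem_erase] at hk
      rw [hwap]
      simp [hk.1, hk.2.1]
    have hwi : w i = u i := by simp [hwap]
    have hwj : w j = 0 := by simp [hwap, Ne.symm hij]
    rw [eF, eG, eS, hwi, hwj, hzi] at key
    have hsq : (u i)^2 ≤ (u j)^2 := by nlinarith [sq_nonneg (u j - z j)]
    have huj : u j = x j := by rw [huap, hgT j hj]; ring
    rw [huj] at hsq
    have : |u i| ≤ |x j| := by
      rw [← Real.sqrt_sq_eq_abs (u i), ← Real.sqrt_sq_eq_abs (x j)]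
      exact Real.sqrt_le_sqrt hsq
    linarith [habs ▸ this]
  · -- (supp z).card < s : then u i = 0
    have hclt : (supp z).card < s := lt_of_le_of_ne hz.1 hcard
    set w : Euc n := WithLp.toLp 2 (fun k => if k = i then u i else z k) with hw
    have hwap : ∀ k, w k = if k = i then u i else z k := fun k => rfl
    have hws : Sparse s w := by
      have hsubw : supp w ⊆ insert i (supp z) := by
        intro k hk
        simp only [supp, Finset.mem_filter, Finset.mem_univ, true_and] at hk
        by_cases h1 : k = i
        · simp [h1]
        · have hzk : z k ≠ 0 := by
            intro h; exact hk (by simp [hwap, h1, h])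
          simp [Finset.mem_insert, supp, hzk]
      calc (supp w).card ≤ (insert i (supp z)).card := Finset.card_le_card hsubw
        _ ≤ (supp z).card + 1 := Finset.card_insert_le _ _
        _ ≤ s := by omega
    have hle := hz.2 w hws
    have key : ∑ k, (u k - z k)^2 ≤ ∑ k, (u k - w k)^2 := by
      have := sum_sq_le_of_norm_le hle
      simpa using this
    have eF : ∑ k, (u k - z k)^2 =
        (u i - z i)^2 + ∑ k ∈ Finset.univ.erase i, (u k - z k)^2 := by
      rw [Finset.add_sum_erase _ (fun k => (u k - z k)^2) (Finset.mem_univ i)]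
    have eG : ∑ k, (u k - w k)^2 =
        (u i - w i)^2 + ∑ k ∈ Finset.univ.erase i, (u k - w k)^2 := by
      rw [Finset.add_sum_erase _ (fun k => (u k - w k)^2) (Finset.mem_univ i)]
    have eS : ∑ k ∈ Finset.univ.erase i, (u k - w k)^2 =
        ∑ k ∈ Finset.univ.erase i, (u k - z k)^2 := by
      apply Finset.sum_congr rfl
      intro k hk
      simp only [Finset.mem_erase] at hk
      rw [hwap]; simp [hk.1]
    have hwi : w i = u i := by simp [hwap]
    rw [eF, eG, eS, hwi, hzi] at key
    have hui0 : u i = 0 := by nlinarith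
    have : η * |g i| = 0 := by rw [← habs, hui0, abs_zero]
    rw [this]
    exact abs_nonneg _
end

section
/- Suppose f is m_{2s}-restricted strongly convex and M_{2s}-restricted strongly smooth, and let x^k be an s-sparse point with T_k ∈ T(x^k;η). Given constants γ ≤ m_{2s} and step-size η ≤ 1/(4M_{2s}), the restricted Newton direction d^k_N satisfies ⟨∇_{T_k} f(x^k), (d^k_N)_{T_k}⟩ ≤ −γ‖d^k_N‖² + ‖x^k_{T_k^c}‖²/(4η). -/
open Finset Filter Topology

lemma hess_symm' {n : ℕ} (f : Euc n → ℝ) (hf : ContDiff ℝ 2 f) (x u v : Euc n) :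
    (inner ℝ u (hess f x v) : ℝ) = (inner ℝ v (hess f x u) : ℝ) := by
  have hsym : IsSymmSndFDerivAt ℝ f x := hf.contDiffAt.isSymmSndFDerivAt (by simp [minSmoothness_of_isRCLikeNormedField])
  set iso : (StrongDual ℝ (Euc n)) ≃ₗᵢ[ℝ] Euc n :=
    (InnerProductSpace.toDual ℝ (Euc n)).symm with hiso
  have hH : hess f x = (iso : StrongDual ℝ (Euc n) →L[ℝ] Euc n).comp
      (fderiv ℝ (fderiv ℝ f) x) := by
    rw [hess]
    have : gradient f = iso ∘ (fderiv ℝ f) := rfl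
    rw [this, LinearIsometryEquiv.comp_fderiv]
  have key : ∀ a b : Euc n, (inner ℝ (hess f x a) b : ℝ) = fderiv ℝ (fderiv ℝ f) x a b := by
    intro a b
    rw [hH]
    simp only [ContinuousLinearMap.comp_apply]
    exact InnerProductSpace.toDual_symm_apply
  calc (inner ℝ u (hess f x v) : ℝ) = inner ℝ (hess f x v) u := real_inner_comm _ _
    _ = fderiv ℝ (fderiv ℝ f) x v u := key v u
    _ = fderiv ℝ (fderiv ℝ f) x u v := hsym v u
    _ = (inner ℝ (hess f x u) v : ℝ) := (key u v).symm
    _ = inner ℝ v (hess f x u) := real_inner_comm _ _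

/-- Lemma "Descent inequality of the Newton direction":
if `f` is `m`-RSC and `M`-RSS, `γ ≤ m` and `0 < η ≤ 1/(4M)`, then the restricted
Newton direction `d` at an s-sparse `x` with `T ∈ T(x;η)` satisfies
`⟨∇_T f(x), d_T⟩ ≤ -γ‖d‖² + ‖x_{T^c}‖²/(4η)`. -/
theorem stmt_4 {n s : ℕ} (hs : 1 ≤ s) (f : Euc n → ℝ) (hf : ContDiff ℝ 2 f)
    (m M : ℝ) (hm : 0 < m) (hM : 0 < M) (hRSC : RSC f s m) (hRSS : RSS f s M)
    (γ η : ℝ) (hγ : γ ≤ m) (hη : 0 < η) (hηM : η ≤ 1 / (4 * M))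
    (x : Euc n) (hx : Sparse s x) (T : Finset (Fin n)) (hT : T ∈ TT f s η x)
    (d : Euc n) (hd : IsNewtonDir f T x d) :
    ∑ i ∈ T, gradient f x i * d i
      ≤ -γ * ‖d‖ ^ 2 + (∑ i ∈ Tᶜ, (x i) ^ 2) / (4 * η) := by
  classical
  set H := hess f x with hHdef
  obtain ⟨hd1, hd2⟩ := hd
  set a : Euc n := WithLp.toLp 2 (fun i => if i ∈ T then 0 else d i) with hadef
  have ha_apply : ∀ i, a i = if i ∈ T then 0 else d i := fun i => rfl
  -- support facts
  have hsubd : supp d ⊆ supp x ∪ T := by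
    intro i hi
    simp only [supp, mem_filter, mem_univ, true_and] at hi
    by_cases h : i ∈ T
    · exact Finset.mem_union_right _ h
    · refine Finset.mem_union_left _ ?_
      simp only [supp, mem_filter, mem_univ, true_and]
      intro h0; exact hi (by rw [hd1 i h, h0, neg_zero])
  have hsuba : supp a ⊆ supp x ∪ T := by
    refine Finset.Subset.trans ?_ hsubd
    intro i hi
    simp only [supp, mem_filter, mem_univ, true_and, ha_apply] at hi ⊢
    by_cases h : i ∈ T
    · simp [h] at hi
    · simpa [h] using hi
  have hsubda : supp (d - a) ⊆ supp x ∪ T := by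
    intro i hi
    simp only [supp, mem_filter, mem_univ, true_and] at hi
    by_cases h : i ∈ T
    · exact Finset.mem_union_right _ h
    · exfalso; apply hi
      show d i - a i = 0
      rw [ha_apply]; simp [h]
  have hcard : ∀ y : Euc n, supp y ⊆ supp x ∪ T → (supp x ∪ supp y).card ≤ 2 * s := by
    intro y hy
    calc (supp x ∪ supp y).card ≤ (supp x ∪ T).card :=
          Finset.card_le_card (Finset.union_subset Finset.subset_union_left hy)
      _ ≤ (supp x).card + T.card := Finset.card_union_le _ _
      _ ≤ s + s := add_le_add hx (le_of_eq hT.1)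
      _ = 2 * s := by ring
  -- quadratic form bounds
  have Qd : m * ‖d‖ ^ 2 ≤ (inner ℝ d (H d) : ℝ) := hRSC x d hx (hcard d hsubd)
  have Qa_up : (inner ℝ a (H a) : ℝ) ≤ M * ‖a‖ ^ 2 := hRSS x a hx (hcard a hsuba)
  have Qa_low : m * ‖a‖ ^ 2 ≤ (inner ℝ a (H a) : ℝ) := hRSC x a hx (hcard a hsuba)
  have QdT : m * ‖d - a‖ ^ 2 ≤ (inner ℝ (d - a) (H (d - a)) : ℝ) :=
    hRSC x (d - a) hx (hcard _ hsubda)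
  -- inner ℝ products as sums
  have hinner : ∀ u v : Euc n, (inner ℝ u v : ℝ) = ∑ i, u i * v i := by
    intro u v
    rw [PiLp.inner_apply]
    simp [RCLike.inner_apply, mul_comm]
  have hnorm : ∀ u : Euc n, ‖u‖ ^ 2 = ∑ i, u i ^ 2 := by
    intro u
    rw [← real_inner_self_eq_norm_sq, hinner]
    exact Finset.sum_congr rfl fun i _ => (sq (u i)).symm
  set S : ℝ := ∑ i ∈ Tᶜ, (x i) ^ 2 with hSdef
  have hS0 : 0 ≤ S := Finset.sum_nonneg fun i _ => sq_nonneg _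
  have ha_sq : ‖a‖ ^ 2 = S := by
    rw [hnorm, ← Finset.sum_add_sum_compl T]
    have h1 : ∑ i ∈ T, a i ^ 2 = 0 :=
      Finset.sum_eq_zero fun i hi => by rw [ha_apply]; simp [hi]
    have h2 : ∑ i ∈ Tᶜ, a i ^ 2 = S := by
      refine Finset.sum_congr rfl fun i hi => ?_
      have hiT : i ∉ T := Finset.mem_compl.mp hi
      rw [ha_apply]; simp [hiT, hd1 i hiT]
    rw [h1, h2, zero_add]
  have had : (inner ℝ a d : ℝ) = S := by
    rw [hinner, ← Finset.sum_add_sum_compl T]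
    have h1 : ∑ i ∈ T, a i * d i = 0 :=
      Finset.sum_eq_zero fun i hi => by rw [ha_apply]; simp [hi]
    have h2 : ∑ i ∈ Tᶜ, a i * d i = S := by
      refine Finset.sum_congr rfl fun i hi => ?_
      have hiT : i ∉ T := Finset.mem_compl.mp hi
      rw [ha_apply]
      simp only [hiT, if_false, hd1 i hiT]
      ring
    rw [h1, h2, zero_add]
  -- the LHS as inner ℝ products
  have e1 : (inner ℝ d (H d) : ℝ) = ∑ i ∈ T, d i * (H d) i + ∑ i ∈ Tᶜ, d i * (H d) i := by
    rw [hinner]; exact (Finset.sum_add_sum_compl T _).symm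
  have e2 : (inner ℝ a (H d) : ℝ) = ∑ i ∈ Tᶜ, d i * (H d) i := by
    rw [hinner, ← Finset.sum_add_sum_compl T]
    have h1 : ∑ i ∈ T, a i * (H d) i = 0 :=
      Finset.sum_eq_zero fun i hi => by rw [ha_apply]; simp [hi]
    have h2 : ∑ i ∈ Tᶜ, a i * (H d) i = ∑ i ∈ Tᶜ, d i * (H d) i := by
      refine Finset.sum_congr rfl fun i hi => ?_
      have hiT : i ∉ T := Finset.mem_compl.mp hi
      rw [ha_apply]; simp [hiT]
    rw [h1, h2, zero_add]
  have e3 : ∑ i ∈ T, gradient f x i * d i = -∑ i ∈ T, d i * (H d) i := by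
    rw [← Finset.sum_neg_distrib]
    refine Finset.sum_congr rfl fun i hi => ?_
    have : H d i = -(gradient f x) i := hd2 i hi
    have hgi : gradient f x i = -(H d i) := by rw [this]; ring
    rw [hgi]; ring
  have hLHS : ∑ i ∈ T, gradient f x i * d i
      = (inner ℝ a (H d) : ℝ) - (inner ℝ d (H d) : ℝ) := by
    rw [e3, e1, e2]; ring
  -- symmetry expansion
  have hsymm := hess_symm' f hf x
  have hexp : (inner ℝ (d - a) (H (d - a)) : ℝ)
      = (inner ℝ d (H d) : ℝ) - 2 * (inner ℝ a (H d) : ℝ) + (inner ℝ a (H a) : ℝ) := by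
    rw [map_sub, inner_sub_left, inner_sub_right, inner_sub_right]
    have : (inner ℝ d (H a) : ℝ) = (inner ℝ a (H d) : ℝ) := hsymm d a
    rw [this]; ring
  have hds : ‖d - a‖ ^ 2 = ‖d‖ ^ 2 - S := by
    rw [norm_sub_sq_real, real_inner_comm, had, ha_sq]; ring
  have key : m * (‖d‖ ^ 2 - S)
      ≤ (inner ℝ d (H d) : ℝ) - 2 * (inner ℝ a (H d) : ℝ) + (inner ℝ a (H a) : ℝ) := by
    rw [← hexp, ← hds]; exact QdT
  -- final arithmetic
  have hMη : η * (4 * M) ≤ 1 := (le_div_iff₀ (by positivity)).mp hηM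
  have hfin : M * S ≤ S / (4 * η) := by
    rw [le_div_iff₀ (by positivity)]
    nlinarith [hS0, hη, hM]
  have Qa_up' : (inner ℝ a (H a) : ℝ) ≤ M * S := by rw [← ha_sq]; exact Qa_up
  have Qa_low' : m * S ≤ (inner ℝ a (H a) : ℝ) := by rw [← ha_sq]; exact Qa_low
  rw [hLHS]
  nlinarith [key, Qd, Qa_up', Qa_low', hfin,
    mul_nonneg (sub_nonneg.mpr hγ) (sq_nonneg ‖d‖)]
end

section
/- Let f : ℝ^n → ℝ be twice continuously differentiable and convex, and let x* be an η-stationary point of (SCO) with Γ* := supp(x*). Then for every x ∈ ℝ^n, f(x*) ≤ f(x) + (x*_{(s)}/η)·‖x_{Γ*^c}‖_1, where x*_{(s)} is the s-th largest absolute value among the entries of x* and ‖·‖_1 is the ℓ₁ norm. -/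
open Finset Filter Topology

section AuxStmt12

variable {n : ℕ}

private lemma euc_norm_sq' (v : Euc n) : ‖v‖^2 = ∑ i, (v i)^2 := by
  rw [EuclideanSpace.norm_eq, Real.sq_sqrt (by positivity)]
  simp [sq_abs]

private lemma convex_grad_ineq' (f : Euc n → ℝ) (hf : ContDiff ℝ 2 f)
    (hconv : ConvexOn ℝ Set.univ f) (p q : Euc n) :
    f p + ∑ i, gradient f p i * (q i - p i) ≤ f q := by
  have hdf : Differentiable ℝ f := hf.differentiable (by norm_num)
  set v := q - p with hv
  have hc : HasDerivAt (fun t : ℝ => p + t • v) v 0 := by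
    simpa using ((hasDerivAt_id (0:ℝ)).smul_const v).const_add p
  have hp0 : p + (0:ℝ) • v = p := by simp
  have hg : HasDerivAt (fun t : ℝ => f (p + t • v)) (fderiv ℝ f p v) 0 := by
    have := ((hdf (p + (0:ℝ) • v)).hasFDerivAt).comp_hasDerivAt 0 hc
    rw [hp0] at this
    exact this
  have hgconv : ConvexOn ℝ Set.univ (fun t : ℝ => f (p + t • v)) := by
    have h2 := hconv.comp_affineMap (AffineMap.lineMap p q)
    have heq : (fun t : ℝ => f (p + t • v)) = f ∘ (AffineMap.lineMap p q) := by
      funext t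
      simp only [Function.comp_apply, AffineMap.lineMap_apply, hv]
      congr 1
      rw [vsub_eq_sub, vadd_eq_add]
      abel
    rw [heq]
    simpa using h2
  have hsl := hgconv.le_slope_of_hasDerivAt (Set.mem_univ (0:ℝ)) (Set.mem_univ 1) one_pos hg
  have hfd : fderiv ℝ f p v = (inner ℝ (gradient f p) v : ℝ) := by
    rw [gradient, InnerProductSpace.toDual_symm_apply]
  have hpv : p + v = q := by rw [hv]; abel
  rw [slope_def_field] at hsl
  simp only [one_smul, zero_smul, add_zero, sub_zero, div_one, hpv, hfd, real_inner_comm v (gradient f p)] at hsl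
  simp only [PiLp.inner_apply, RCLike.inner_apply, conj_trivial] at hsl
  have hvv : ∀ i, v i = q i - p i := fun i => by simp [hv, PiLp.sub_apply]
  simp only [hvv] at hsl
  linarith [hsl]

private lemma getD_le_of_countP' {l : List ℝ} (h : l.Pairwise (· ≤ ·)) {k : ℕ} (hk : k < l.length)
    {v : ℝ} (hc : k + 1 ≤ l.countP (fun a => decide (a ≤ v))) : l.getD k 0 ≤ v := by
  by_contra hlt
  push_neg at hlt
  have hd : ∀ a ∈ l.drop k, v < a := by
    have hsd : (l.drop k).Pairwise (· ≤ ·) := h.sublist (List.drop_sublist k l)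
    rw [List.drop_eq_getElem_cons hk] at hsd
    rw [List.drop_eq_getElem_cons hk]
    have hget : l.getD k 0 = l[k] := List.getD_eq_getElem l 0 hk
    intro a ha
    rcases List.mem_cons.mp ha with rfl | ha
    · rw [← hget]; exact hlt
    · exact lt_of_lt_of_le (hget ▸ hlt) ((List.pairwise_cons.mp hsd).1 a ha)
  have h0 : (l.drop k).countP (fun a => decide (a ≤ v)) = 0 := by
    rw [List.countP_eq_zero]
    intro a ha
    simpa using not_le.mpr (hd a ha)
  have hsum := List.countP_append (p := fun a => decide (a ≤ v)) (l₁ := l.take k) (l₂ := l.drop k)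
  rw [List.take_append_drop] at hsum
  have hle := List.countP_le_length (p := fun a => decide (a ≤ v)) (l := l.take k)
  simp [List.length_take] at hle
  omega

private lemma le_getD_of_countP' {l : List ℝ} (h : l.Pairwise (· ≤ ·)) {k : ℕ} (hk : k < l.length)
    {v : ℝ} (hc : l.countP (fun a => decide (a < v)) ≤ k) : v ≤ l.getD k 0 := by
  by_contra hlt
  push_neg at hlt
  have hget : l.getD k 0 = l[k] := List.getD_eq_getElem l 0 hk
  have ht : ∀ a ∈ l.take (k+1), a < v := by
    intro a ha
    obtain ⟨m, hm, rfl⟩ := List.mem_take_iff_getElem.mp ha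
    have hmk : m ≤ k := by omega
    rcases eq_or_lt_of_le hmk with rfl | hmk'
    · exact hget ▸ hlt
    · have := List.pairwise_iff_getElem.mp h m k (by omega) hk hmk'
      exact lt_of_le_of_lt this (hget ▸ hlt)
  have hcnt : (l.take (k+1)).countP (fun a => decide (a < v)) = (l.take (k+1)).length := by
    rw [List.countP_eq_length]
    intro a ha
    simpa using ht a ha
  have hsum := List.countP_append (p := fun a => decide (a < v)) (l₁ := l.take (k+1)) (l₂ := l.drop (k+1))
  rw [List.take_append_drop] at hsum
  have hlen : (l.take (k+1)).length = k + 1 := by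
    rw [List.length_take]; omega
  omega

private lemma sort_length' (x : Euc n) :
    ((Finset.univ.val.map (fun i => |x i|)).sort (· ≤ ·)).length = n := by
  rw [Multiset.length_sort, Multiset.card_map]
  simp

private lemma sort_countP' (x : Euc n) (p : ℝ → Prop) [DecidablePred p] :
    ((Finset.univ.val.map (fun i => |x i|)).sort (· ≤ ·)).countP (fun a => decide (p a))
      = (Finset.univ.filter (fun i => p |x i|)).card := by
  have h1 : (((Finset.univ.val.map (fun i => |x i|)).sort (· ≤ ·)) : Multiset ℝ)
      = Finset.univ.val.map (fun i => |x i|) := Multiset.sort_eq _ _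
  have h2 := congrArg (Multiset.countP p) h1
  rw [Multiset.coe_countP] at h2
  rw [h2, Multiset.countP_map]
  rfl

private lemma nthAbs_nonneg' (x : Euc n) (s : ℕ) : 0 ≤ nthAbs x s := by
  unfold nthAbs
  set l := ((Finset.univ.val.map (fun i => |x i|)).sort (· ≤ ·)) with hl
  by_cases hk : n - s < l.length
  · rw [List.getD_eq_getElem l 0 hk]
    have hm : l[n-s] ∈ l := List.getElem_mem hk
    have hm2 := (Multiset.mem_sort _).mp hm
    obtain ⟨i, _, heq⟩ := Multiset.mem_map.mp hm2
    rw [← heq]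
    exact abs_nonneg _
  · rw [List.getD_eq_default l 0 (by omega)]

private lemma nthAbs_eq_min' {s : ℕ} (x : Euc n) (hs : 1 ≤ s) (hcard : (supp x).card = s)
    {j : Fin n} (hj : j ∈ supp x) (hmin : ∀ k ∈ supp x, |x j| ≤ |x k|) :
    nthAbs x s = |x j| := by
  have hsn : s ≤ n := hcard ▸ (card_le_card (subset_univ _)).trans_eq (card_univ.trans (by simp))
  unfold nthAbs
  set l := ((Finset.univ.val.map (fun i => |x i|)).sort (· ≤ ·)) with hl
  have hsort : l.Pairwise (· ≤ ·) := Multiset.pairwise_sort _ _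
  have hlen : l.length = n := sort_length' x
  have hk : n - s < l.length := by omega
  have hjne : x j ≠ 0 := by simpa [supp] using hj
  have hccompl : (supp x)ᶜ.card = n - s := by
    rw [card_compl, hcard]; simp
  have h1 : l.getD (n - s) 0 ≤ |x j| := by
    apply getD_le_of_countP' hsort hk
    rw [hl, sort_countP' x (fun a => a ≤ |x j|)]
    have hsub : insert j ((supp x)ᶜ) ⊆ Finset.univ.filter (fun i => |x i| ≤ |x j|) := by
      intro i hi
      rcases Finset.mem_insert.mp hi with rfl | hi
      · simp
      · have : x i = 0 := by
          by_contra hne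
          exact (Finset.mem_compl.mp hi) (by simp [supp, hne])
        simp [this]
    have := card_le_card hsub
    rw [Finset.card_insert_of_notMem (by simp [hj])] at this
    omega
  have h2 : |x j| ≤ l.getD (n - s) 0 := by
    apply le_getD_of_countP' hsort hk
    rw [hl, sort_countP' x (fun a => a < |x j|)]
    have hsub : Finset.univ.filter (fun i => |x i| < |x j|) ⊆ (supp x)ᶜ := by
      intro i hi
      rw [Finset.mem_compl]
      intro hmem
      exact absurd (hmin i hmem) (not_le.mpr (Finset.mem_filter.mp hi).2)
    have := card_le_card hsub
    omega
  exact le_antisymm h1 h2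

private lemma mem_supp_iff' (x : Euc n) (i : Fin n) : i ∈ supp x ↔ x i ≠ 0 := by
  simp [supp]

/-- squared-norm comparison from `HardThr` minimality -/
private lemma sq_sum_le' {s : ℕ} {u xs : Euc n}
    (hmin : ∀ w : Euc n, Sparse s w → ‖u - xs‖ ≤ ‖u - w‖)
    (w : Euc n) (hw : Sparse s w) :
    ∑ i, (u i - xs i)^2 ≤ ∑ i, (u i - w i)^2 := by
  have h := hmin w hw
  have h2 := pow_le_pow_left₀ (norm_nonneg _) h 2
  rw [euc_norm_sq', euc_norm_sq'] at h2
  simpa [PiLp.sub_apply] using h2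

/-- coordinates of `xs - η • gradient f xs` -/
private lemma u_apply' (f : Euc n → ℝ) (η : ℝ) (xs : Euc n) (i : Fin n) :
    (xs - η • gradient f xs) i = xs i - η * gradient f xs i := by
  simp [PiLp.sub_apply, PiLp.smul_apply, smul_eq_mul]

private lemma one_update' {s : ℕ} {u xs : Euc n}
    (hmin : ∀ w : Euc n, Sparse s w → ‖u - xs‖ ≤ ‖u - w‖)
    {i : Fin n} (hcase : i ∈ supp xs ∨ (supp xs).card < s) (hsp : Sparse s xs) :
    u i = xs i := by
  set w : Euc n := WithLp.toLp 2 (Function.update xs i (u i)) with hw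
  have hwapp : ∀ j, w j = if j = i then u i else xs j := by
    intro j; rw [hw]; exact Function.update_apply xs i (u i) j
  have hsupp : supp w ⊆ insert i (supp xs) := by
    intro k hk
    rw [mem_supp_iff'] at hk
    rw [hwapp] at hk
    by_cases hki : k = i
    · subst hki; exact Finset.mem_insert_self _ _
    · rw [if_neg hki] at hk
      exact Finset.mem_insert_of_mem ((mem_supp_iff' xs k).mpr hk)
  have hwsp : Sparse s w := by
    unfold Sparse
    calc (supp w).card ≤ (insert i (supp xs)).card := card_le_card hsupp
    _ ≤ s := by
        rcases hcase with hc | hc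
        · rw [Finset.insert_eq_self.mpr hc]; exact hsp
        · calc (insert i (supp xs)).card ≤ (supp xs).card + 1 := Finset.card_insert_le _ _
            _ ≤ s := by omega
  have hsq := sq_sum_le' hmin w hwsp
  rw [← Finset.sum_erase_add _ _ (Finset.mem_univ i),
      ← Finset.sum_erase_add _ (fun j => (u j - w j)^2) (Finset.mem_univ i)] at hsq
  have heq : ∑ j ∈ univ.erase i, (u j - w j)^2 = ∑ j ∈ univ.erase i, (u j - xs j)^2 := by
    apply Finset.sum_congr rfl
    intro j hj
    rw [hwapp, if_neg (Finset.mem_erase.mp hj).1]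
  rw [heq] at hsq
  have hwi : w i = u i := by rw [hwapp, if_pos rfl]
  rw [hwi] at hsq
  have : (u i - xs i)^2 ≤ 0 := by simpa using hsq
  have := le_antisymm this (sq_nonneg _)
  have := pow_eq_zero_iff (n := 2) (by norm_num) |>.mp this
  linarith [this]

private lemma swap_update' {s : ℕ} {u xs : Euc n}
    (hmin : ∀ w : Euc n, Sparse s w → ‖u - xs‖ ≤ ‖u - w‖)
    {i j : Fin n} (hi : i ∉ supp xs) (hj : j ∈ supp xs) (hcard : (supp xs).card = s)
    (huj : u j = xs j) : |u i| ≤ |xs j| := by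
  have hij : i ≠ j := fun h => hi (h ▸ hj)
  set w : Euc n := WithLp.toLp 2 (Function.update (Function.update xs j 0) i (u i)) with hw
  have hwapp : ∀ k, w k = if k = i then u i else if k = j then 0 else xs k := by
    intro k; rw [hw, WithLp.ofLp_toLp, Function.update_apply, Function.update_apply]
  have hsupp : supp w ⊆ insert i ((supp xs).erase j) := by
    intro k hk
    rw [mem_supp_iff'] at hk
    rw [hwapp] at hk
    by_cases hki : k = i
    · subst hki; exact Finset.mem_insert_self _ _
    · rw [if_neg hki] at hk
      by_cases hkj : k = j
      · rw [if_pos hkj] at hk; exact absurd rfl hk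
      · rw [if_neg hkj] at hk
        exact Finset.mem_insert_of_mem (Finset.mem_erase.mpr ⟨hkj, (mem_supp_iff' xs k).mpr hk⟩)
  have hs1 : 1 ≤ s := hcard ▸ Finset.card_pos.mpr ⟨j, hj⟩
  have hwsp : Sparse s w := by
    unfold Sparse
    have h1 : ((supp xs).erase j).card = s - 1 := by rw [Finset.card_erase_of_mem hj, hcard]
    calc (supp w).card ≤ (insert i ((supp xs).erase j)).card := card_le_card hsupp
      _ ≤ ((supp xs).erase j).card + 1 := Finset.card_insert_le _ _
      _ ≤ s := by omega
  have hsq := sq_sum_le' hmin w hwsp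
  have hjmem : j ∈ univ.erase i := Finset.mem_erase.mpr ⟨Ne.symm hij, Finset.mem_univ j⟩
  have split : ∀ F : Fin n → ℝ,
      ∑ k, F k = ((univ.erase i).erase j).sum F + F j + F i := by
    intro F
    rw [← Finset.sum_erase_add _ _ (Finset.mem_univ i), ← Finset.sum_erase_add _ _ hjmem]
  rw [split, split] at hsq
  have heq : ∑ k ∈ (univ.erase i).erase j, (u k - w k)^2
      = ∑ k ∈ (univ.erase i).erase j, (u k - xs k)^2 := by
    apply Finset.sum_congr rfl
    intro k hk
    obtain ⟨hkj, hki, -⟩ : k ≠ j ∧ k ≠ i ∧ True := by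
      have h1 := Finset.mem_erase.mp hk
      have h2 := Finset.mem_erase.mp h1.2
      exact ⟨h1.1, h2.1, trivial⟩
    rw [hwapp, if_neg hki, if_neg hkj]
  rw [heq] at hsq
  have hwj : w j = 0 := by rw [hwapp, if_neg (Ne.symm hij), if_pos rfl]
  have hwi : w i = u i := by rw [hwapp, if_pos rfl]
  have hxi : xs i = 0 := by
    by_contra hne
    exact hi ((mem_supp_iff' xs i).mpr hne)
  rw [hwj, hwi, huj, hxi] at hsq
  have hsq2 : (u i)^2 ≤ (xs j)^2 := by nlinarith [hsq]
  rw [← Real.sqrt_sq_eq_abs, ← Real.sqrt_sq_eq_abs]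
  exact Real.sqrt_le_sqrt hsq2

end AuxStmt12

/-- Theorem "Global convergence", inequality (ε-optimality):
if `f` is convex and `xs` is an η-stationary point with `Γ* = supp xs`, then for every `x`,
`f(xs) ≤ f(x) + (xs_{(s)}/η)‖x_{Γ*^c}‖₁`. -/
theorem stmt_12 {n s : ℕ} (hs : 1 ≤ s) (f : Euc n → ℝ) (hf : ContDiff ℝ 2 f)
    (hconv : ConvexOn ℝ Set.univ f)
    (η : ℝ) (hη : 0 < η) (xs : Euc n) (hstat : EtaStationary f s η xs) :
    ∀ x : Euc n, f xs ≤ f x + nthAbs xs s / η * ∑ i ∈ (supp xs)ᶜ, |x i| := by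
  intro x
  obtain ⟨hsp, hmin⟩ := hstat
  set g := gradient f xs with hg
  have hu_app : ∀ i, (xs - η • g) i = xs i - η * g i := u_apply' f η xs
  have hsp' : (supp xs).card ≤ s := hsp
  have hgrad0 : ∀ i ∈ supp xs, g i = 0 := by
    intro i hi
    have h1 := one_update' hmin (Or.inl hi) hsp
    rw [hu_app] at h1
    have h2 : η * g i = 0 := by linarith
    rcases mul_eq_zero.mp h2 with h | h
    · exact absurd h (ne_of_gt hη)
    · exact h
  have hbound : ∀ i ∉ supp xs, |g i| ≤ nthAbs xs s / η := by
    intro i hi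
    have hxi : xs i = 0 := by
      by_contra hne
      exact hi ((mem_supp_iff' xs i).mpr hne)
    rcases lt_or_eq_of_le hsp' with hc | hc
    · have h1 := one_update' (i := i) hmin (Or.inr hc) hsp
      rw [hu_app, hxi] at h1
      have h2 : η * g i = 0 := by linarith
      have h3 : g i = 0 := by
        rcases mul_eq_zero.mp h2 with h | h
        · exact absurd h (ne_of_gt hη)
        · exact h
      rw [h3, abs_zero]
      exact div_nonneg (nthAbs_nonneg' xs s) hη.le
    · have hne : (supp xs).Nonempty := Finset.card_pos.mp (by omega)
      obtain ⟨j, hj, hjmin⟩ := Finset.exists_min_image (supp xs) (fun k => |xs k|) hne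
      have huj : (xs - η • g) j = xs j := by
        rw [hu_app, hgrad0 j hj]; ring
      have h2 := swap_update' hmin hi hj hc huj
      rw [hu_app i, hxi] at h2
      have h3 : η * |g i| ≤ |xs j| := by
        have : |0 - η * g i| = η * |g i| := by
          rw [zero_sub, abs_neg, abs_mul, abs_of_pos hη]
        linarith [this ▸ h2]
      rw [nthAbs_eq_min' xs hs hc hj hjmin, le_div_iff₀ hη]
      linarith
  have hcvx := convex_grad_ineq' f hf hconv xs x
  have hsum : ∑ i, g i * (x i - xs i) = ∑ i ∈ (supp xs)ᶜ, g i * x i := by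
    rw [← Finset.sum_add_sum_compl (supp xs)]
    have h1 : ∑ i ∈ supp xs, g i * (x i - xs i) = 0 :=
      Finset.sum_eq_zero (fun i hi => by rw [hgrad0 i hi]; ring)
    rw [h1, zero_add]
    apply Finset.sum_congr rfl
    intro i hi
    have hxi : xs i = 0 := by
      by_contra hne
      exact (Finset.mem_compl.mp hi) ((mem_supp_iff' xs i).mpr hne)
    rw [hxi]; ring
  rw [hsum] at hcvx
  have hfinal : -(∑ i ∈ (supp xs)ᶜ, g i * x i)
      ≤ nthAbs xs s / η * ∑ i ∈ (supp xs)ᶜ, |x i| := by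
    rw [Finset.mul_sum, ← Finset.sum_neg_distrib]
    apply Finset.sum_le_sum
    intro i hi
    have hb := hbound i (Finset.mem_compl.mp hi)
    calc -(g i * x i) ≤ |g i * x i| := neg_le_abs _
      _ = |g i| * |x i| := abs_mul _ _
      _ ≤ nthAbs xs s / η * |x i| := mul_le_mul_of_nonneg_right hb (abs_nonneg _)
  linarith
end

section
/- Let x* be an η-stationary point of (SCO) for some η > 0, and suppose there exist m_{2s} > 0 and a neighborhood N of x* such that f(x) ≥ f(x*) + ⟨∇f(x*), x − x*⟩ + (m_{2s}/2)‖x − x*‖² for every s-sparse x ∈ N. Then x* is a strictly local minimizer of (SCO): there is a neighborhood N' of x* such that f(x) > f(x*) for every s-sparse x ∈ N' with x ≠ x*. -/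
open Finset Filter Topology

lemma mem_supp' {n : ℕ} {x : Euc n} {i : Fin n} : i ∈ supp x ↔ x i ≠ 0 := by
  simp [supp]

lemma normsq' {n : ℕ} (v : Euc n) : ‖v‖ ^ 2 = ∑ i, (v i) ^ 2 := by
  rw [EuclideanSpace.norm_eq, Real.sq_sqrt (by positivity)]
  simp [sq_abs]

lemma coord_le_norm {n : ℕ} (v : Euc n) (i : Fin n) : |v i| ≤ ‖v‖ := by
  have h1 : (v i) ^ 2 ≤ ∑ j, (v j) ^ 2 :=
    Finset.single_le_sum (f := fun j => (v j) ^ 2) (fun j _ => sq_nonneg _) (Finset.mem_univ i)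
  calc |v i| = Real.sqrt ((v i) ^ 2) := (Real.sqrt_sq_eq_abs _).symm
    _ ≤ Real.sqrt (∑ j, (v j) ^ 2) := Real.sqrt_le_sqrt h1
    _ = ‖v‖ := by rw [← normsq', Real.sqrt_sq (norm_nonneg _)]

lemma hardThr_eq {n : ℕ} (u z : Euc n) (s : ℕ) (hz : z ∈ HardThr s u) (i : Fin n)
    (hi : z i ≠ 0 ∨ (supp z).card < s) : z i = u i := by
  by_contra hne
  set w : Euc n := WithLp.toLp 2 (Function.update z i (u i)) with hw
  have hwj : ∀ j, j ≠ i → w j = z j := fun j hj => Function.update_of_ne hj _ _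
  have hwi : w i = u i := Function.update_self _ _ _
  have hsupp : supp w ⊆ insert i (supp z) := by
    intro j hj
    rw [mem_supp'] at hj
    rcases eq_or_ne j i with rfl | h
    · exact Finset.mem_insert_self _ _
    · exact Finset.mem_insert_of_mem (mem_supp'.mpr (by rwa [hwj j h] at hj))
  have hws : Sparse s w := by
    rcases hi with hi | hi
    · have hsub : supp w ⊆ supp z := by
        intro j hj
        rcases Finset.mem_insert.mp (hsupp hj) with rfl | h
        · exact mem_supp'.mpr hi
        · exact h
      exact le_trans (Finset.card_le_card hsub) hz.1
    · calc (supp w).card ≤ (insert i (supp z)).card := Finset.card_le_card hsupp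
        _ ≤ (supp z).card + 1 := Finset.card_insert_le _ _
        _ ≤ s := hi
  have hle := hz.2 w hws
  have h1 : ‖u - w‖ ^ 2 < ‖u - z‖ ^ 2 := by
    rw [normsq', normsq']
    apply Finset.sum_lt_sum
    · intro j _
      rcases eq_or_ne j i with rfl | h
      · show (u j - w j) ^ 2 ≤ (u j - z j) ^ 2
        rw [hwi]; simp [sq_nonneg]
      · show (u j - w j) ^ 2 ≤ (u j - z j) ^ 2
        rw [hwj j h]
    · refine ⟨i, Finset.mem_univ i, ?_⟩
      show (u i - w i) ^ 2 < (u i - z i) ^ 2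
      rw [hwi]
      simpa using pow_pos (abs_pos.mpr (sub_ne_zero.mpr (fun h => hne h.symm))) 2
  have h2 : ‖u - z‖ ^ 2 ≤ ‖u - w‖ ^ 2 := by
    apply pow_le_pow_left₀ (norm_nonneg _) hle
  linarith

/-- an η-stationary point at which `f` satisfies a restricted strong
convexity growth condition is a strictly local minimizer of (SCO). -/
theorem stmt_16 {n s : ℕ} (hs : 1 ≤ s) (f : Euc n → ℝ) (hf : ContDiff ℝ 2 f)
    (η : ℝ) (hη : 0 < η) (xs : Euc n) (hstat : EtaStationary f s η xs)
    (m : ℝ) (hm : 0 < m) (U : Set (Euc n)) (hU : U ∈ nhds xs)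
    (hgrowth : ∀ x ∈ U, Sparse s x →
      f xs + (inner ℝ (gradient f xs) (x - xs) : ℝ) + m / 2 * ‖x - xs‖ ^ 2 ≤ f x) :
    ∃ V ∈ nhds xs, ∀ x ∈ V, Sparse s x → x ≠ xs → f xs < f x := by
  set g : Euc n := gradient f xs with hg
  -- gradient vanishes on the support
  have hgsupp : ∀ i : Fin n, xs i ≠ 0 → g i = 0 := by
    intro i hi
    have h := hardThr_eq _ _ _ hstat i (Or.inl hi)
    have h' : xs i = xs i - η * g i := h
    have : η * g i = 0 := by linarith
    rcases mul_eq_zero.mp this with h0 | h0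
    · exact absurd h0 hη.ne'
    · exact h0
  by_cases hcard : (supp xs).card < s
  · -- gradient is zero everywhere
    have hgz : ∀ i : Fin n, g i = 0 := by
      intro i
      by_cases hi : xs i ≠ 0
      · exact hgsupp i hi
      · push_neg at hi
        have h := hardThr_eq _ _ _ hstat i (Or.inr hcard)
        have h' : xs i = xs i - η * g i := h
        have : η * g i = 0 := by linarith
        rcases mul_eq_zero.mp this with h0 | h0
        · exact absurd h0 hη.ne'
        · exact h0
    refine ⟨U, hU, fun x hx hsx hne => ?_⟩
    have h := hgrowth x hx hsx
    have hinner : (inner ℝ g (x - xs) : ℝ) = 0 := by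
      rw [PiLp.inner_apply]
      simp [hgz]
    have hnorm : 0 < ‖x - xs‖ := norm_pos_iff.mpr (sub_ne_zero.mpr hne)
    nlinarith [mul_pos hm (pow_pos hnorm 2)]
  · -- card of support equals s
    have hcard' : (supp xs).card = s := le_antisymm hstat.1 (not_lt.mp hcard)
    have hne : (supp xs).Nonempty := Finset.card_pos.mp (by omega)
    set ε : ℝ := (supp xs).inf' hne (fun i => |xs i|) with hε
    have hεpos : 0 < ε := by
      rw [hε, Finset.lt_inf'_iff]
      intro i hi
      exact abs_pos.mpr (mem_supp'.mp hi)
    refine ⟨U ∩ Metric.ball xs ε, Filter.inter_mem hU (Metric.ball_mem_nhds _ hεpos), ?_⟩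
    rintro x ⟨hxU, hxB⟩ hsx hxne
    have hsub : supp xs ⊆ supp x := by
      intro i hi
      rw [mem_supp']
      intro hxi
      have h1 : ε ≤ |xs i| := Finset.inf'_le _ hi
      have h2 : |xs i| = |(xs - x) i| := by
        show |xs i| = |xs i - x i|
        rw [hxi, sub_zero]
      have h3 : |(xs - x) i| ≤ ‖xs - x‖ := coord_le_norm _ _
      have h4 : ‖xs - x‖ < ε := by
        rw [norm_sub_rev, ← dist_eq_norm]
        exact Metric.mem_ball.mp hxB
      linarith
    have hseq : supp xs = supp x :=
      Finset.eq_of_subset_of_card_le hsub (by rw [hcard']; exact hsx)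
    have hinner : (inner ℝ g (x - xs) : ℝ) = 0 := by
      rw [PiLp.inner_apply]
      apply Finset.sum_eq_zero
      intro i _
      by_cases hi : xs i ≠ 0
      · simp [hgsupp i hi]
      · push_neg at hi
        have hix : i ∉ supp x := by rw [← hseq, mem_supp']; simpa using hi
        have hxi : x i = 0 := by simpa [mem_supp'] using hix
        show inner ℝ (g i) ((x - xs) i) = 0
        have : (x - xs) i = 0 := by show x i - xs i = 0; rw [hxi, hi, sub_zero]
        simp [this]
    have h := hgrowth x hxU hsx
    have hnorm : 0 < ‖x - xs‖ := norm_pos_iff.mpr (sub_ne_zero.mpr hxne)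
    nlinarith [mul_pos hm (pow_pos hnorm 2)]
end
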